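/- Let M be a d×d real orthogonal matrix with M² = I (an involutive relabeling), let X, Y ∈ ℝ^{n×d}, and form the combined (pooled) dataset with training matrices X_C = [X; X Mᵀ] and Y_C = [Y; Y Mᵀ] (vertical block concatenation, in ℝ^{2n×d}). Suppose X_C has full column rank, so the least-squares problem min_A ‖Y_C − X_C Aᵀ‖_F has a unique minimizer A_C. Then A_C is equivariant under the relabeling: M A_C Mᵀ = A_C. -/

import Mathlib

open Matrix

/-- The Frobenius norm of a real matrix. -/
noncomputable def frob {m n : Type*} [Fintype m] [Fintype n] (A : Matrix m n ℝ) : ℝ :=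
  Real.sqrt (∑ i, ∑ j, (A i j) ^ 2)

lemma sumsq_eq_trace {m n : Type*} [Fintype m] [Fintype n] (A : Matrix m n ℝ) :
    (∑ i, ∑ j, (A i j) ^ 2) = (A * Aᵀ).trace := by
  simp [Matrix.trace, Matrix.mul_apply, Matrix.diag, sq]

lemma sumsq_mul_orth {m d : Type*} [Fintype m] [Fintype d] [DecidableEq d]
    (P : Matrix m d ℝ) (M : Matrix d d ℝ) (h : M * Mᵀ = 1) :
    (∑ i, ∑ j, ((P * M) i j) ^ 2) = ∑ i, ∑ j, (P i j) ^ 2 := by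
  rw [sumsq_eq_trace, sumsq_eq_trace, Matrix.transpose_mul, Matrix.mul_assoc,
    ← Matrix.mul_assoc M, h, Matrix.one_mul]

lemma sumsq_fromRows {m₁ m₂ n : Type*} [Fintype m₁] [Fintype m₂] [Fintype n]
    (P : Matrix m₁ n ℝ) (Q : Matrix m₂ n ℝ) :
    (∑ i, ∑ j, ((Matrix.fromRows P Q) i j) ^ 2) =
      (∑ i, ∑ j, (P i j) ^ 2) + ∑ i, ∑ j, (Q i j) ^ 2 := by
  simp [Fintype.sum_sum_type, Matrix.fromRows_apply_inl, Matrix.fromRows_apply_inr]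

lemma fromRows_sub' {m₁ m₂ n : Type*}
    (P P' : Matrix m₁ n ℝ) (Q Q' : Matrix m₂ n ℝ) :
    Matrix.fromRows P Q - Matrix.fromRows P' Q' =
      Matrix.fromRows (P - P') (Q - Q') := by
  ext i j
  cases i <;> simp [Matrix.fromRows_apply_inl, Matrix.fromRows_apply_inr]

/-- The unique least-squares model fitted to the pooled dataset
`X_C = [X; X Mᵀ]`, `Y_C = [Y; Y Mᵀ]` (normal data stacked on top of mirrored data,
with `M` an orthogonal involution) is equivariant under the relabeling:
`M A_C Mᵀ = A_C`. -/
theorem combined_fit_is_symmetric {d n : ℕ}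
    (M : Matrix (Fin d) (Fin d) ℝ) (hM : Mᵀ * M = 1) (hM2 : M * M = 1)
    (X Y : Matrix (Fin n) (Fin d) ℝ)
    (hrank : IsUnit ((Matrix.fromRows X (X * Mᵀ))ᵀ * Matrix.fromRows X (X * Mᵀ)))
    (AC : Matrix (Fin d) (Fin d) ℝ)
    (hAC : ∀ B : Matrix (Fin d) (Fin d) ℝ,
      frob (Matrix.fromRows Y (Y * Mᵀ) - Matrix.fromRows X (X * Mᵀ) * ACᵀ) ≤
        frob (Matrix.fromRows Y (Y * Mᵀ) - Matrix.fromRows X (X * Mᵀ) * Bᵀ))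
    (hACuniq : ∀ B : Matrix (Fin d) (Fin d) ℝ,
      (∀ C : Matrix (Fin d) (Fin d) ℝ,
        frob (Matrix.fromRows Y (Y * Mᵀ) - Matrix.fromRows X (X * Mᵀ) * Bᵀ) ≤
          frob (Matrix.fromRows Y (Y * Mᵀ) - Matrix.fromRows X (X * Mᵀ) * Cᵀ)) → B = AC) :
    M * AC * Mᵀ = AC := by
  -- M is symmetric: Mᵀ = M
  have hMT : Mᵀ = M := by
    calc Mᵀ = Mᵀ * (M * M) := by rw [hM2, Matrix.mul_one]
    _ = (Mᵀ * M) * M := by rw [Matrix.mul_assoc]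
    _ = M := by rw [hM, Matrix.one_mul]
  have hMM : M * Mᵀ = 1 := by rw [hMT]; exact hM2
  -- The objective is invariant under A ↦ M * A * M
  have key : ∀ A : Matrix (Fin d) (Fin d) ℝ,
      frob (Matrix.fromRows Y (Y * Mᵀ) - Matrix.fromRows X (X * Mᵀ) * (M * A * Mᵀ)ᵀ) =
      frob (Matrix.fromRows Y (Y * Mᵀ) - Matrix.fromRows X (X * Mᵀ) * Aᵀ) := by
    intro A
    have e1 : Y - X * (M * A * M)ᵀ = (Y * M - (X * M) * Aᵀ) * M := by
      rw [Matrix.sub_mul, Matrix.mul_assoc Y M M, hM2, Matrix.mul_one,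
        Matrix.transpose_mul, Matrix.transpose_mul, hMT, ← Matrix.mul_assoc,
        ← Matrix.mul_assoc]
    have e2 : Y * M - (X * M) * (M * A * M)ᵀ = (Y - X * Aᵀ) * M := by
      rw [Matrix.sub_mul, Matrix.transpose_mul, Matrix.transpose_mul, hMT,
        ← Matrix.mul_assoc, ← Matrix.mul_assoc, Matrix.mul_assoc X M M, hM2,
        Matrix.mul_one]
    rw [hMT, Matrix.fromRows_mul, Matrix.fromRows_mul, fromRows_sub', fromRows_sub',
      e1, e2]
    unfold frob
    rw [sumsq_fromRows, sumsq_fromRows, sumsq_mul_orth _ _ hMM, sumsq_mul_orth _ _ hMM,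
      add_comm]
  -- M * AC * Mᵀ is also a minimizer
  have hmin : ∀ C : Matrix (Fin d) (Fin d) ℝ,
      frob (Matrix.fromRows Y (Y * Mᵀ) - Matrix.fromRows X (X * Mᵀ) * (M * AC * Mᵀ)ᵀ) ≤
        frob (Matrix.fromRows Y (Y * Mᵀ) - Matrix.fromRows X (X * Mᵀ) * Cᵀ) := by
    intro C
    rw [key AC]
    calc frob (Matrix.fromRows Y (Y * Mᵀ) - Matrix.fromRows X (X * Mᵀ) * ACᵀ)
        ≤ frob (Matrix.fromRows Y (Y * Mᵀ) - Matrix.fromRows X (X * Mᵀ) * (M * C * Mᵀ)ᵀ) :=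
          hAC _
      _ = _ := key C
  exact hACuniq _ hmin
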